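/- Define the sequence (xₙ) of positive integers by x₁ = 2, x₂ = 122 and xₙ = 62xₙ₋₁ − xₙ₋₂ for n ≥ 3. Then (xₙ) is strictly increasing, and a positive integer x satisfies 4x² − 15y² = 1 for some positive integer y if and only if x = xₙ for some n ≥ 1. -/

import Mathlib

private def pseq : ℕ → ℕ × ℕ
  | 0 => (2, 1)
  | n + 1 => (31 * (pseq n).1 + 60 * (pseq n).2, 16 * (pseq n).1 + 31 * (pseq n).2)

private lemma pseq_pell : ∀ n, 4 * (pseq n).1 ^ 2 = 15 * (pseq n).2 ^ 2 + 1 := by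
  intro n
  induction n with
  | zero => rfl
  | succ n ih =>
      show 4 * (31 * (pseq n).1 + 60 * (pseq n).2) ^ 2 =
        15 * (16 * (pseq n).1 + 31 * (pseq n).2) ^ 2 + 1
      ring_nf
      ring_nf at ih
      linarith

private lemma pseq_pos : ∀ n, 0 < (pseq n).1 ∧ 0 < (pseq n).2 := by
  intro n
  induction n with
  | zero => exact ⟨by decide, by decide⟩
  | succ n ih =>
      constructor
      · show 0 < 31 * (pseq n).1 + 60 * (pseq n).2; omega
      · show 0 < 16 * (pseq n).1 + 31 * (pseq n).2; omega

private lemma pseq_rec (n : ℕ) :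
    (pseq (n + 2)).1 + (pseq n).1 = 62 * (pseq (n + 1)).1 := by
  show 31 * (pseq (n+1)).1 + 60 * (16 * (pseq n).1 + 31 * (pseq n).2) + (pseq n).1 =
    62 * (31 * (pseq n).1 + 60 * (pseq n).2)
  show 31 * (31 * (pseq n).1 + 60 * (pseq n).2) + 60 * (16 * (pseq n).1 + 31 * (pseq n).2)
      + (pseq n).1 = 62 * (31 * (pseq n).1 + 60 * (pseq n).2)
  ring

private lemma pseq_mono (n : ℕ) : (pseq n).1 < (pseq (n + 1)).1 := by
  have h := pseq_pos n
  show (pseq n).1 < 31 * (pseq n).1 + 60 * (pseq n).2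
  omega

private lemma y_unique {X y1 y2 : ℕ} (h1 : 4 * X ^ 2 = 15 * y1 ^ 2 + 1)
    (h2 : 4 * X ^ 2 = 15 * y2 ^ 2 + 1) : y1 = y2 := by
  have : y1 ^ 2 = y2 ^ 2 := by omega
  exact Nat.pow_left_injective (by norm_num) this

private lemma sol_in_pseq : ∀ X : ℕ, 0 < X → ∀ y : ℕ, 0 < y →
    4 * X ^ 2 = 15 * y ^ 2 + 1 → ∃ n, X = (pseq n).1 := by
  intro X
  induction X using Nat.strong_induction_on with
  | _ X ih =>
    intro hX y hy heq
    rcases lt_or_ge X 3 with hX3 | hX3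
    · interval_cases X
      · exfalso; nlinarith
      · -- X = 2 : y must be 1
        exact ⟨0, rfl⟩
    rcases lt_or_ge X 16 with hX16 | hX16
    · exfalso
      have hyX : y < X := by nlinarith
      interval_cases X <;> interval_cases y <;> omega
    · -- descent
      have h1 : 60 * y < 31 * X := by nlinarith
      have h2 : 16 * X < 31 * y := by nlinarith
      set X' := 31 * X - 60 * y with hX'
      set y' := 31 * y - 16 * X with hy'
      have hX'pos : 0 < X' := by omega
      have hy'pos : 0 < y' := by omega
      have hcastX : (X' : ℤ) = 31 * X - 60 * y := by push_cast [hX']; omega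
      have hcasty : (y' : ℤ) = 31 * y - 16 * X := by push_cast [hy']; omega
      have heqZ : (4 : ℤ) * X ^ 2 = 15 * y ^ 2 + 1 := by exact_mod_cast heq
      have heq' : 4 * X' ^ 2 = 15 * y' ^ 2 + 1 := by
        have : (4 : ℤ) * X' ^ 2 = 15 * y' ^ 2 + 1 := by
          rw [hcastX, hcasty]; linear_combination heqZ
        exact_mod_cast this
      have hlt : X' < X := by
        have : 4 * y ^ 2 > X ^ 2 := by nlinarith
        have : 2 * y > X := by nlinarith
        omega
      obtain ⟨n, hn⟩ := ih X' hlt hX'pos y' hy'pos heq'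
      refine ⟨n + 1, ?_⟩
      have hyP : y' = (pseq n).2 := y_unique (hn ▸ heq') (pseq_pell n)
      show X = 31 * (pseq n).1 + 60 * (pseq n).2
      rw [← hn, ← hyP]
      omega

theorem pell_sequence_case_c
    (x : ℕ → ℕ) (h1 : x 1 = 2) (h2 : x 2 = 122)
    (hrec : ∀ n, 3 ≤ n → (x n : ℤ) = 62 * x (n - 1) - x (n - 2)) :
    (∀ n, 1 ≤ n → x n < x (n + 1)) ∧
    (∀ X : ℕ, 0 < X →
      ((∃ y : ℕ, 0 < y ∧ 4 * X^2 = 15 * y^2 + 1) ↔ ∃ n, 1 ≤ n ∧ X = x n)) := by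
  have hx : ∀ n, x (n + 1) = (pseq n).1 ∧ x (n + 2) = (pseq (n + 1)).1 := by
    intro n
    induction n with
    | zero =>
        exact ⟨h1, by rw [h2]; decide⟩
    | succ n ih =>
        refine ⟨ih.2, ?_⟩
        have hr := hrec (n + 3) (by omega)
        simp only [show n + 3 - 1 = n + 2 from rfl, show n + 3 - 2 = n + 1 from rfl] at hr
        have hrec2 := pseq_rec n
        have : ((x (n + 3) : ℤ)) = 62 * (pseq (n + 1)).1 - (pseq n).1 := by
          rw [hr, ih.1, ih.2]
        have hz : (x (n + 3) : ℤ) = ((pseq (n + 2)).1 : ℤ) := by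
          rw [this]
          have : ((pseq (n+2)).1 : ℤ) + (pseq n).1 = 62 * (pseq (n+1)).1 := by
            exact_mod_cast hrec2
          linarith
        exact_mod_cast hz
  constructor
  · intro n hn
    obtain ⟨m, rfl⟩ := Nat.exists_eq_add_of_le hn
    rw [Nat.add_comm]
    rw [(hx m).1, show m + 1 + 1 = m + 1 + 1 from rfl, (hx m).2]
    exact pseq_mono m
  · intro X hX
    constructor
    · rintro ⟨y, hy, heq⟩
      obtain ⟨n, hn⟩ := sol_in_pseq X hX y hy heq
      exact ⟨n + 1, by omega, by rw [(hx n).1, hn]⟩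
    · rintro ⟨n, hn, rfl⟩
      obtain ⟨m, rfl⟩ := Nat.exists_eq_add_of_le hn
      rw [Nat.add_comm, (hx m).1]
      exact ⟨(pseq m).2, (pseq_pos m).2, pseq_pell m⟩
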